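/- For i = 1, 2, let D_i = (n, g_{i,0}; (c_{i,1},n_{i,1}), ..., (c_{i,ℓ_i},n_{i,ℓ_i})) be data sets of degree n forming an (r,s)-compatible pair, i.e., n_{1,r} = n_{2,s} = m and c_{1,r} + c_{2,s} ≡ 0 (mod m). Then the tuple D = (n, g_{1,0} + g_{2,0}; consisting of all pairs from D_1 except (c_{1,r},n_{1,r}) together with all pairs from D_2 except (c_{2,s},n_{2,s})) is a valid data set, and its genus satisfies 1 + g(D) - g(D_1) - g(D_2) = n/m. -/

import Mathlib

/-- A data set of degree `n` with orbifold genus `g0` and cone-point data `L`: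
each cone order divides `n`, each `c_i` is coprime to `n_i`, and
`Σ_j (n/n_j)·c_j ≡ 0 (mod n)`. -/
def IsDataSet (n _g0 : ℕ) (L : List (ℤ × ℕ)) : Prop :=
  1 ≤ n ∧ (∀ p ∈ L, 0 < p.2 ∧ p.2 ∣ n ∧ Int.gcd p.1 p.2 = 1) ∧
    (n : ℤ) ∣ (L.map (fun p => ((n / p.2 : ℕ) : ℤ) * p.1)).sum

/-- The Riemann–Hurwitz equation `(2-2g)/n = 2-2g0 + Σ_j (1/n_j - 1)`, in its
integer form `2 - 2g = n(2 - 2g0) - Σ_j (n - n/n_j)`. -/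
def GenusEq (n g0 : ℕ) (L : List (ℤ × ℕ)) (g : ℤ) : Prop :=
  2 - 2 * g = (n : ℤ) * (2 - 2 * (g0 : ℤ)) -
    (L.map (fun p => (n : ℤ) - ((n / p.2 : ℕ) : ℤ))).sum

/-- Combining an `(r,s)`-compatible pair `(D_1, D_2)` of data sets of
degree `n` (cone pairs of equal order `m` with `c_{1,r} + c_{2,s} ≡ 0 (mod m)`) by
dropping the compatible cone pairs and adding the orbifold genera yields a valid
data set `D` with `1 + g(D) - g(D_1) - g(D_2) = n/m`. -/
theorem stmt7 (n g10 g20 m : ℕ) (c1r c2s : ℤ)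
    (A1 B1 A2 B2 : List (ℤ × ℕ)) (g g1 g2 : ℤ)
    (hD1 : IsDataSet n g10 (A1 ++ [(c1r, m)] ++ B1))
    (hD2 : IsDataSet n g20 (A2 ++ [(c2s, m)] ++ B2))
    (hcomp : (m : ℤ) ∣ c1r + c2s)
    (hg1 : GenusEq n g10 (A1 ++ [(c1r, m)] ++ B1) g1)
    (hg2 : GenusEq n g20 (A2 ++ [(c2s, m)] ++ B2) g2)
    (hg : GenusEq n (g10 + g20) (A1 ++ B1 ++ (A2 ++ B2)) g) :
    IsDataSet n (g10 + g20) (A1 ++ B1 ++ (A2 ++ B2)) ∧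
      1 + g - g1 - g2 = ((n / m : ℕ) : ℤ) := by
  obtain ⟨hn1, hmem1, hdvd1⟩ := hD1
  obtain ⟨_, hmem2, hdvd2⟩ := hD2
  have hm : m ∣ n := (hmem1 (c1r, m) (by simp)).2.1
  have hmpos : 0 < m := (hmem1 (c1r, m) (by simp)).1
  have hnm : (n : ℤ) = ((n / m : ℕ) : ℤ) * m := by
    rw [← Nat.cast_mul, Nat.div_mul_cancel hm]
  constructor
  · refine ⟨hn1, ?_, ?_⟩
    · intro p hp
      simp only [List.mem_append] at hp
      rcases hp with (h | h) | (h | h)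
      · exact hmem1 p (by simp [h])
      · exact hmem1 p (by simp [h])
      · exact hmem2 p (by simp [h])
      · exact hmem2 p (by simp [h])
    · simp only [List.map_append, List.sum_append, List.map_cons, List.map_nil,
        List.sum_cons, List.sum_nil] at hdvd1 hdvd2 ⊢
      have key : (n : ℤ) ∣ ((n / m : ℕ) : ℤ) * (c1r + c2s) := by
        obtain ⟨k, hk⟩ := hcomp
        rw [hk, ← mul_assoc, mul_comm (((n / m : ℕ) : ℤ)) (m : ℤ), mul_comm (m : ℤ)]
        exact Dvd.dvd.mul_right ⟨1, by rw [hnm]; ring⟩ k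
      have := (hdvd1.add hdvd2).sub key
      convert this using 1
      case e'_2 => rfl
      ring
  · simp only [GenusEq, List.map_append, List.sum_append, List.map_cons, List.map_nil,
      List.sum_cons, List.sum_nil] at hg1 hg2 hg
    have hcast : ((g10 + g20 : ℕ) : ℤ) = (g10 : ℤ) + g20 := by push_cast; ring
    rw [hcast] at hg
    linarith
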